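/- Let V be a real inner product space, v, u ∈ V with v ≠ 0, and t > 0, r ≥ 0 such that tv + ru ≠ 0 and ⟨v + (r/t)u, v⟩ + ‖v + (r/t)u‖·‖v‖ ≠ 0. Then ⟨tv + ru, v⟩ − ‖tv + ru‖·‖v‖ = −(r²/t) · (‖u‖²‖v‖² − ⟨u,v⟩²) / (⟨v + (r/t)u, v⟩ + ‖v + (r/t)u‖·‖v‖). -/

import Mathlib

open RealInnerProductSpace

/-- The algebraic identity behind the computation of the exponent `-ℓ I(u)`. -/
theorem inner_norm_identity {V : Type*} [NormedAddCommGroup V]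
    [InnerProductSpace ℝ V] (v u : V) (hv : v ≠ 0) {t r : ℝ}
    (ht : 0 < t) (hr : 0 ≤ r) (hne : t • v + r • u ≠ 0)
    (hden : ⟪v + (r / t) • u, v⟫ + ‖v + (r / t) • u‖ * ‖v‖ ≠ 0) :
    ⟪t • v + r • u, v⟫ - ‖t • v + r • u‖ * ‖v‖ =
      -(r ^ 2 / t) *
        ((‖u‖ ^ 2 * ‖v‖ ^ 2 - ⟪u, v⟫ ^ 2) /
          (⟪v + (r / t) • u, v⟫ + ‖v + (r / t) • u‖ * ‖v‖)) := by
  set s : ℝ := r / t with hs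
  set w : V := v + s • u with hw
  have ht' : t ≠ 0 := ne_of_gt ht
  have hscale : t • v + r • u = t • w := by
    rw [hw, smul_add, smul_smul]
    congr 2
    field_simp [hs]
    rw [hs]; field_simp
  have hwv : ⟪w, v⟫ = ⟪v, v⟫ + s * ⟪u, v⟫ := by
    rw [hw, inner_add_left, real_inner_smul_left]
  have hvv : ⟪v, v⟫ = ‖v‖ ^ 2 := real_inner_self_eq_norm_sq v
  have hww : ‖w‖ ^ 2 = ‖v‖ ^ 2 + 2 * s * ⟪u, v⟫ + s ^ 2 * ‖u‖ ^ 2 := by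
    rw [← real_inner_self_eq_norm_sq, hw, inner_add_add_self]
    simp only [real_inner_smul_left, real_inner_smul_right,
      real_inner_self_eq_norm_sq, real_inner_comm v u, norm_smul, Real.norm_eq_abs,
      mul_pow, sq_abs]
    ring
  have key : (⟪w, v⟫ - ‖w‖ * ‖v‖) * (⟪w, v⟫ + ‖w‖ * ‖v‖) =
      -(s ^ 2) * (‖u‖ ^ 2 * ‖v‖ ^ 2 - ⟪u, v⟫ ^ 2) := by
    have : (⟪w, v⟫ - ‖w‖ * ‖v‖) * (⟪w, v⟫ + ‖w‖ * ‖v‖) =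
        ⟪w, v⟫ ^ 2 - ‖w‖ ^ 2 * ‖v‖ ^ 2 := by ring
    rw [this, hwv, hvv, hww]
    ring
  have hdiff : ⟪w, v⟫ - ‖w‖ * ‖v‖ =
      -(s ^ 2) * ((‖u‖ ^ 2 * ‖v‖ ^ 2 - ⟪u, v⟫ ^ 2) / (⟪w, v⟫ + ‖w‖ * ‖v‖)) := by
    field_simp
    linarith [key]
  rw [hscale, real_inner_smul_left, norm_smul, Real.norm_of_nonneg ht.le]
  have : t * ⟪w, v⟫ - t * ‖w‖ * ‖v‖ = t * (⟪w, v⟫ - ‖w‖ * ‖v‖) := by ring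
  rw [this, hdiff, hs]
  field_simp
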